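/- arXiv:0906.0696 — 3 statements merged into one kernel-verified Lean document; each statement's English description precedes it below -/
import Mathlib

section
/- For all positive integers n, B_{n+5} = \sum_{k=1}^{n} (k^5 + 5k^4 + 20k^3 + 50k^2 + 75k + 52) * S(n,k). -/
/-- Stirling numbers of the second kind. -/
def stirling : ℕ → ℕ → ℕ
  | 0, 0 => 1
  | 0, _ + 1 => 0
  | _ + 1, 0 => 0
  | n + 1, k + 1 => stirling n k + (k + 1) * stirling n (k + 1)

/-- The `n`-th Bell number. -/
def bell (n : ℕ) : ℕ := ∑ k ∈ Finset.range (n + 1), stirling n k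

lemma stirling_eq_zero : ∀ n k : ℕ, n < k → stirling n k = 0
  | 0, _ + 1, _ => rfl
  | n + 1, k + 1, h => by
    show stirling n k + (k + 1) * stirling n (k + 1) = 0
    rw [stirling_eq_zero n k (by omega), stirling_eq_zero n (k + 1) (by omega)]
    simp

lemma step (f : ℕ → ℕ) (n : ℕ) :
    ∑ k ∈ Finset.range (n + 2), f k * stirling (n + 1) k
      = ∑ k ∈ Finset.range (n + 1), (f (k + 1) + k * f k) * stirling n k := by
  rw [Finset.sum_range_succ' (fun k => f k * stirling (n + 1) k) (n + 1)]
  have h0 : stirling (n + 1) 0 = 0 := rfl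
  rw [h0, mul_zero, add_zero]
  have hsplit : ∀ k, f (k + 1) * stirling (n + 1) (k + 1)
      = f (k + 1) * stirling n k + (k + 1) * f (k + 1) * stirling n (k + 1) := by
    intro k
    show f (k + 1) * (stirling n k + (k + 1) * stirling n (k + 1)) = _
    ring
  rw [Finset.sum_congr rfl (fun k _ => hsplit k), Finset.sum_add_distrib]
  have h2 : ∑ k ∈ Finset.range (n + 1), (k + 1) * f (k + 1) * stirling n (k + 1)
      = ∑ k ∈ Finset.range (n + 1), k * f k * stirling n k := by
    have hA := Finset.sum_range_succ' (fun k => k * f k * stirling n k) (n + 1)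
    have hB := Finset.sum_range_succ (fun k => k * f k * stirling n k) (n + 1)
    have hz : stirling n (n + 1) = 0 := stirling_eq_zero n (n + 1) (by omega)
    simp only [hz, mul_zero, add_zero, Nat.zero_mul, zero_mul] at hA hB
    omega
  rw [h2, ← Finset.sum_add_distrib]
  exact Finset.sum_congr rfl fun k _ => by ring

theorem bell_add_five (n : ℕ) (hn : 0 < n) :
    bell (n + 5) =
      ∑ k ∈ Finset.Icc 1 n,
        (k ^ 5 + 5 * k ^ 4 + 20 * k ^ 3 + 50 * k ^ 2 + 75 * k + 52) * stirling n k := by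
  calc bell (n + 5)
      = ∑ k ∈ Finset.range (n + 6), (1 : ℕ) * stirling (n + 5) k := by simp [bell]
    _ = ∑ k ∈ Finset.range (n + 5), (k + 1) * stirling (n + 4) k :=
        (step (fun _ => 1) (n + 4)).trans (Finset.sum_congr rfl fun k _ => by ring)
    _ = ∑ k ∈ Finset.range (n + 4), (k ^ 2 + 2 * k + 2) * stirling (n + 3) k :=
        (step (fun k => k + 1) (n + 3)).trans (Finset.sum_congr rfl fun k _ => by ring)
    _ = ∑ k ∈ Finset.range (n + 3), (k ^ 3 + 3 * k ^ 2 + 6 * k + 5) * stirling (n + 2) k :=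
        (step (fun k => k ^ 2 + 2 * k + 2) (n + 2)).trans
          (Finset.sum_congr rfl fun k _ => by ring)
    _ = ∑ k ∈ Finset.range (n + 2),
          (k ^ 4 + 4 * k ^ 3 + 12 * k ^ 2 + 20 * k + 15) * stirling (n + 1) k :=
        (step (fun k => k ^ 3 + 3 * k ^ 2 + 6 * k + 5) (n + 1)).trans
          (Finset.sum_congr rfl fun k _ => by ring)
    _ = ∑ k ∈ Finset.range (n + 1),
          (k ^ 5 + 5 * k ^ 4 + 20 * k ^ 3 + 50 * k ^ 2 + 75 * k + 52) * stirling n k :=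
        (step (fun k => k ^ 4 + 4 * k ^ 3 + 12 * k ^ 2 + 20 * k + 15) n).trans
          (Finset.sum_congr rfl fun k _ => by ring)
    _ = ∑ k ∈ Finset.Icc 1 n,
          (k ^ 5 + 5 * k ^ 4 + 20 * k ^ 3 + 50 * k ^ 2 + 75 * k + 52) * stirling n k := by
        rw [Finset.sum_range_succ'
          (fun k => (k ^ 5 + 5 * k ^ 4 + 20 * k ^ 3 + 50 * k ^ 2 + 75 * k + 52)
            * stirling n k) n]
        obtain ⟨m, rfl⟩ : ∃ m, n = m + 1 := ⟨n - 1, by omega⟩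
        have h0 : stirling (m + 1) 0 = 0 := rfl
        rw [h0]
        rw [show Finset.Icc 1 (m + 1) = Finset.Ico 1 (m + 2) by
              exact (Finset.Ico_add_one_right_eq_Icc 1 (m + 1)).symm,
            Finset.sum_Ico_eq_sum_range]
        simp only [show m + 2 - 1 = m + 1 from rfl, mul_zero, add_zero]
        exact Finset.sum_congr rfl fun k _ => by rw [add_comm 1 k]
end

section
/- For all nonnegative integers j and 1 \le \ell \le j+1, \sum_{r=\ell}^{j} B_{j-r} * C(j,r) * C(r,\ell) + B_{j-\ell+1} * C(j, \ell-1) = B_{j-\ell+1} * C(j+1, \ell). -/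
lemma stirling_zero_right : ∀ n, stirling (n + 1) 0 = 0 := fun _ => rfl

lemma stirling_eq_zero_of_lt : ∀ {n k : ℕ}, n < k → stirling n k = 0
  | 0, _ + 1, _ => rfl
  | n + 1, k + 1, h => by
    rw [stirling, stirling_eq_zero_of_lt (by omega), stirling_eq_zero_of_lt (by omega)]
    simp

lemma stirling_succ_one : ∀ n, stirling (n + 1) 1 = 1
  | 0 => rfl
  | n + 1 => by
    rw [show stirling (n + 1 + 1) 1 = stirling (n + 1) 0 + 1 * stirling (n + 1) 1 from rfl,
      stirling_zero_right, stirling_succ_one n]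

lemma stirling_succ_succ (n k : ℕ) :
    stirling (n + 1) (k + 1) = ∑ m ∈ Finset.range (n + 1), Nat.choose n m * stirling m k := by
  induction n generalizing k with
  | zero =>
    cases k <;> simp [stirling]
  | succ n ih =>
    rw [show stirling (n + 1 + 1) (k + 1) = stirling (n + 1) k + (k + 1) * stirling (n + 1) (k + 1)
      from rfl]
    cases k with
    | zero =>
      rw [show stirling (n + 1) 0 = 0 from rfl, stirling_succ_one, Finset.sum_range_succ']
      simp [stirling_zero_right]
      rfl
    | succ k =>
      rw [ih k, ih (k + 1)]
      have pascal : ∀ m ∈ Finset.range (n + 2),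
          Nat.choose (n + 1) m * stirling m (k + 1) =
          Nat.choose n m * stirling m (k + 1) + Nat.choose n (m - 1) * stirling m (k + 1) *
            (if m = 0 then 0 else 1) := by
        intro m _
        cases m with
        | zero => simp
        | succ m => simp [Nat.choose_succ_succ, Nat.add_mul]; ring
      rw [Finset.sum_congr rfl pascal, Finset.sum_add_distrib]
      have h1 : ∑ m ∈ Finset.range (n + 2), Nat.choose n m * stirling m (k + 1) =
          ∑ m ∈ Finset.range (n + 1), Nat.choose n m * stirling m (k + 1) := by
        rw [Finset.sum_range_succ, Nat.choose_eq_zero_of_lt (by omega)]; simp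
      have h2 : ∑ m ∈ Finset.range (n + 2),
          Nat.choose n (m - 1) * stirling m (k + 1) * (if m = 0 then 0 else 1) =
          ∑ m ∈ Finset.range (n + 1), Nat.choose n m * stirling (m + 1) (k + 1) := by
        rw [Finset.sum_range_succ']
        simp
      rw [h1, h2]
      have h3 : ∀ m ∈ Finset.range (n + 1),
          Nat.choose n m * stirling (m + 1) (k + 1) =
          Nat.choose n m * stirling m k + (k + 1) * (Nat.choose n m * stirling m (k + 1)) := by
        intro m _
        rw [show stirling (m + 1) (k + 1) = stirling m k + (k + 1) * stirling m (k + 1) from rfl]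
        ring
      rw [Finset.sum_congr rfl h3, Finset.sum_add_distrib, ← Finset.mul_sum]
      ring

lemma bell_succ (n : ℕ) :
    bell (n + 1) = ∑ m ∈ Finset.range (n + 1), Nat.choose n m * bell m := by
  rw [bell, Finset.sum_range_succ']
  rw [show stirling (n + 1) 0 = 0 from rfl, Nat.add_zero]
  have h1 : ∀ k ∈ Finset.range (n + 1), stirling (n + 1) (k + 1) =
      ∑ m ∈ Finset.range (n + 1), Nat.choose n m * stirling m k :=
    fun k _ => stirling_succ_succ n k
  rw [Finset.sum_congr rfl h1, Finset.sum_comm]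
  apply Finset.sum_congr rfl
  intro m hm
  rw [Finset.mem_range] at hm
  rw [← Finset.mul_sum, bell]
  congr 1
  refine (Finset.sum_subset (Finset.range_subset_range.2 (by omega)) ?_).symm
  intro k _ hk
  rw [Finset.mem_range] at hk
  exact stirling_eq_zero_of_lt (by omega)

lemma bell_succ' (n : ℕ) :
    bell (n + 1) = ∑ s ∈ Finset.range (n + 1), Nat.choose n s * bell (n - s) := by
  rw [bell_succ, ← Finset.sum_range_reflect]
  apply Finset.sum_congr rfl
  intro s hs
  rw [Finset.mem_range] at hs
  rw [show n + 1 - 1 - s = n - s from by omega, Nat.choose_symm (by omega : s ≤ n)]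

theorem coefficient_identity (j ℓ : ℕ) (h1 : 1 ≤ ℓ) (h2 : ℓ ≤ j + 1) :
    (∑ r ∈ Finset.Icc ℓ j, bell (j - r) * Nat.choose j r * Nat.choose r ℓ) +
        bell (j - ℓ + 1) * Nat.choose j (ℓ - 1) =
      bell (j - ℓ + 1) * Nat.choose (j + 1) ℓ := by
  obtain ⟨l, rfl⟩ : ∃ l, ℓ = l + 1 := ⟨ℓ - 1, by omega⟩
  rw [Nat.choose_succ_succ j l, Nat.mul_add]
  simp only [Nat.add_sub_cancel]
  rcases Nat.lt_or_ge j (l + 1) with hj | hj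
  · have : Finset.Icc (l + 1) j = ∅ := by
      rw [Finset.Icc_eq_empty_iff]; omega
    rw [this, Finset.sum_empty]
    rw [Nat.choose_eq_zero_of_lt hj]
    ring
  -- main case: l + 1 ≤ j
  have key : (∑ r ∈ Finset.Icc (l + 1) j,
      bell (j - r) * Nat.choose j r * Nat.choose r (l + 1)) =
      bell (j - (l + 1) + 1) * Nat.choose j (l + 1) := by
    set n := j - (l + 1) with hn
    have hjn : j = l + 1 + n := by omega
    have hIcc : Finset.Icc (l + 1) j = Finset.map
        ⟨fun s => l + 1 + s, add_right_injective (l + 1)⟩ (Finset.range (n + 1)) := by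
      ext r
      simp only [Finset.mem_Icc, Finset.mem_map, Finset.mem_range,
        Function.Embedding.coeFn_mk]
      constructor
      · rintro ⟨ha, hb⟩; exact ⟨r - (l + 1), by omega, by omega⟩
      · rintro ⟨s, hs, rfl⟩; omega
    rw [hIcc, Finset.sum_map]
    simp only [Function.Embedding.coeFn_mk]
    have step : ∀ s ∈ Finset.range (n + 1),
        bell (j - (l + 1 + s)) * Nat.choose j (l + 1 + s) * Nat.choose (l + 1 + s) (l + 1) =
        Nat.choose j (l + 1) * (Nat.choose n s * bell (n - s)) := by
      intro s hs
      rw [Finset.mem_range] at hs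
      have hch : Nat.choose j (l + 1 + s) * Nat.choose (l + 1 + s) (l + 1) =
          Nat.choose j (l + 1) * Nat.choose n s := by
        have h := Nat.choose_mul (n := j) (k := l + 1 + s) (s := l + 1) (by omega)
        rw [show l + 1 + s - (l + 1) = s from by omega] at h
        rw [h, ← hn]
      rw [Nat.mul_assoc, hch, show j - (l + 1 + s) = n - s from by omega]
      ring
    rw [Finset.sum_congr rfl step, ← Finset.mul_sum, ← bell_succ' n]
    ring
  rw [key]
  ring
end

section
/- For every prime p, B_p \equiv 2 (mod p). -/
def g (n k : ℕ) : ℤ := ∑ j ∈ Finset.range (k+1), (-1)^j * (k.choose j) * (j:ℤ)^n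

lemma L1 (n k : ℕ) :
    g n (k+1) + ∑ i ∈ Finset.range (k+1), (-1:ℤ)^i * (k.choose i) * ((i:ℤ)+1)^n
    = g n k := by
  unfold g
  rw [Finset.sum_range_succ' _ (k+1)]
  conv_rhs => rw [Finset.sum_range_succ' _ k]
  rw [add_right_comm, ← Finset.sum_add_distrib]
  rw [Finset.sum_range_succ]
  have h1 : ∀ i, ((k+1).choose (i+1) : ℤ) = k.choose i + k.choose (i+1) := by
    intro i
    rw [Nat.choose_succ_succ]
    push_cast
    ring
  have h2 : ∀ i ∈ Finset.range k,
      (-1:ℤ)^(i+1) * ((k+1).choose (i+1)) * ((i:ℤ)+1)^n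
      + (-1:ℤ)^i * (k.choose i) * ((i:ℤ)+1)^n
      = (-1:ℤ)^(i+1) * (k.choose (i+1)) * ((i:ℤ)+1)^n := by
    intro i _
    rw [h1]
    ring
  have h2' : ∑ i ∈ Finset.range k,
      ((-1:ℤ)^(i+1) * ((k+1).choose (i+1)) * ((i:ℤ)+1)^n
      + (-1:ℤ)^i * (k.choose i) * ((i:ℤ)+1)^n)
      = ∑ i ∈ Finset.range k, (-1:ℤ)^(i+1) * (k.choose (i+1)) * ((i:ℤ)+1)^n :=
    Finset.sum_congr rfl h2
  have hk : (k.choose (k+1) : ℤ) = 0 := by simp [Nat.choose_eq_zero_of_lt]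
  push_cast at h2' ⊢
  rw [h2']
  rw [h1, hk]
  simp [pow_succ]

lemma key : ∀ n k, ((-1:ℤ)^k * k.factorial * stirling n k) = g n k := by
  intro n
  induction n with
  | zero =>
    intro k
    match k with
    | 0 => simp [g, stirling]
    | k + 1 =>
      have h0 : stirling 0 (k+1) = 0 := rfl
      rw [h0]
      unfold g
      have : ∀ j ∈ Finset.range (k+2), (-1:ℤ)^j * ((k+1).choose j) * (j:ℤ)^0
          = (-1:ℤ)^j * ((k+1).choose j) := fun j _ => by rw [pow_zero, mul_one]
      rw [Finset.sum_congr rfl this, Int.alternating_sum_range_choose]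
      simp
  | succ n ih =>
    intro k
    match k with
    | 0 => simp [g, stirling]
    | k + 1 =>
      have hsum : g (n+1) (k+1)
          = -((k:ℤ)+1) * ∑ i ∈ Finset.range (k+1),
              (-1:ℤ)^i * (k.choose i) * ((i:ℤ)+1)^n := by
        unfold g
        rw [Finset.sum_range_succ' _ (k+1), Finset.mul_sum]
        have hterm : ∀ i ∈ Finset.range (k+1),
            (-1:ℤ)^(i+1) * ((k+1).choose (i+1)) * ((i+1:ℕ):ℤ)^(n+1)
            = -((k:ℤ)+1) * ((-1:ℤ)^i * (k.choose i) * ((i:ℤ)+1)^n) := by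
          intro i _
          have hc : (((k+1).choose (i+1) : ℤ)) * ((i:ℤ)+1) = ((k:ℤ)+1) * (k.choose i) := by
            exact_mod_cast congrArg (Nat.cast : ℕ → ℤ) (Nat.add_one_mul_choose_eq k i).symm
          push_cast
          linear_combination ((-1:ℤ)^(i+1) * ((i:ℤ)+1)^n) * hc
        rw [Finset.sum_congr rfl hterm]
        simp
      have hL := L1 n k
      have hrec : stirling (n+1) (k+1) = stirling n k + (k+1) * stirling n (k+1) := rfl
      rw [hsum, hrec]
      have h1 := ih k
      have h2 := ih (k+1)
      have : ∑ i ∈ Finset.range (k+1), (-1:ℤ)^i * (k.choose i) * ((i:ℤ)+1)^n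
          = g n k - g n (k+1) := by linarith [hL]
      rw [this, ← h1, ← h2]
      push_cast [Nat.factorial_succ]
      ring

lemma key' (R : Type*) [CommRing R] (n k : ℕ) :
    ((-1:R)^k * k.factorial * stirling n k)
      = ∑ j ∈ Finset.range (k+1), (-1:R)^j * (k.choose j) * (j:R)^n := by
  have h := key n k
  unfold g at h
  have h2 := congrArg (fun x : ℤ => (x : R)) h
  push_cast at h2
  exact_mod_cast h2

lemma stirling_zero_of_lt : ∀ n k, n < k → stirling n k = 0 := by
  intro n
  induction n with
  | zero => intro k hk; match k, hk with | k+1, _ => rfl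
  | succ n ih =>
    intro k hk
    match k, hk with
    | k+1, hk =>
      show stirling n k + (k+1) * stirling n (k+1) = 0
      rw [ih k (by omega), ih (k+1) (by omega)]; ring

lemma stirling_self : ∀ n, stirling n n = 1 := by
  intro n; induction n with
  | zero => rfl
  | succ n ih =>
    show stirling n n + (n+1) * stirling n (n+1) = 1
    rw [ih, stirling_zero_of_lt n (n+1) (by omega)]; ring

lemma stirling_one : ∀ n, stirling (n+1) 1 = 1 := by
  intro n; induction n with
  | zero => rfl
  | succ n ih =>
    show stirling (n+1) 0 + 1 * stirling (n+1) 1 = 1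
    rw [ih, show stirling (n+1) 0 = 0 from rfl]

lemma stirling_one_right : ∀ k, stirling 1 (k+2) = 0 := by
  intro k; show stirling 0 (k+1) + (k+2) * stirling 0 (k+2) = 0; simp [stirling]

theorem bell_prime_mod (p : ℕ) (hp : p.Prime) : bell p ≡ 2 [MOD p] := by
  haveI : Fact p.Prime := ⟨hp⟩
  have hp2 := hp.two_le
  obtain ⟨m, rfl⟩ : ∃ m, p = m + 1 := ⟨p - 1, by omega⟩
  set p := m + 1 with hpdef
  have hz : ∀ k, k < p → (stirling p k : ZMod p) = (stirling 1 k : ZMod p) := by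
    intro k hk
    have e1 := key' (ZMod p) p k
    have e2 := key' (ZMod p) 1 k
    have hs : ∑ j ∈ Finset.range (k+1), (-1:ZMod p)^j * (k.choose j) * (j:ZMod p)^p
        = ∑ j ∈ Finset.range (k+1), (-1:ZMod p)^j * (k.choose j) * (j:ZMod p)^1 :=
      Finset.sum_congr rfl fun j _ => by rw [ZMod.pow_card, pow_one]
    have e3 : (-1:ZMod p)^k * (k.factorial : ZMod p) * (stirling p k : ZMod p)
        = (-1:ZMod p)^k * (k.factorial : ZMod p) * (stirling 1 k : ZMod p) :=
      e1.trans (hs.trans e2.symm)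
    have hfac : ((k.factorial : ZMod p)) ≠ 0 := by
      rw [Ne, ZMod.natCast_eq_zero_iff]
      intro hdvd
      exact absurd ((Nat.Prime.dvd_factorial hp).mp hdvd) (by omega)
    have hne : ((-1:ZMod p)^k * (k.factorial : ZMod p)) ≠ 0 :=
      mul_ne_zero (pow_ne_zero _ (neg_ne_zero.mpr one_ne_zero)) hfac
    exact mul_left_cancel₀ hne e3
  have hsum : ((bell p : ℕ) : ZMod p) = ∑ k ∈ Finset.range (p+1), (stirling p k : ZMod p) := by
    unfold bell; push_cast; rfl
  have hsub : ({1, p} : Finset ℕ) ⊆ Finset.range (p+1) := by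
    intro x hx
    simp only [Finset.mem_insert, Finset.mem_singleton] at hx
    rcases hx with rfl | rfl <;> simp [Finset.mem_range] <;> omega
  have hzero : ∀ x ∈ Finset.range (p+1), x ∉ ({1, p}:Finset ℕ) → (stirling p x : ZMod p) = 0 := by
    intro x hxr hxn
    simp only [Finset.mem_range] at hxr
    simp only [Finset.mem_insert, Finset.mem_singleton, not_or] at hxn
    obtain ⟨hx1, hxp⟩ := hxn
    match x, hx1, hxp with
    | 0, _, _ => exact_mod_cast congrArg (Nat.cast : ℕ → ZMod p) (show stirling p 0 = 0 from rfl)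
    | 1, h, _ => exact absurd rfl h
    | x+2, _, hxp =>
      rw [hz (x+2) (by omega), stirling_one_right]
      simp
  have hcast : ((bell p : ℕ) : ZMod p) = ((2:ℕ) : ZMod p) := by
    rw [hsum, ← Finset.sum_subset hsub hzero, Finset.sum_pair (show (1:ℕ) ≠ p by omega)]
    rw [show stirling p 1 = 1 from stirling_one m, show stirling p p = 1 from stirling_self p]
    norm_num
  exact (ZMod.natCast_eq_natCast_iff _ _ _).mp hcast
end
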